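/- Let φ be a 3-CNF formula with n variables and m clauses in which every variable occurs both unnegated and negated, and let G(φ) be the graph constructed from φ (triangle gadgets X_i, X̄_i, Y_i for each variable; a clause vertex C_j adjacent exactly to the three vertices for the negations of its literals; an extra vertex z adjacent to all 2n literal vertices). Then for every well-connected set M of G(φ) with |M| ≥ 5 and every clause index j, if the clause vertex C_j belongs to M then not all three of its neighbors (the vertices corresponding to the negations of the three literals of c_j) belong to M. -/
import Mathlib


/-- A set `M` of vertices of `G` is *well-connected* if (i) any two distinct
vertices of `M` are joined by a path in `G` avoiding all other vertices of `M`,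
and (ii) the subgraph induced by the complement of `M` is connected
(the empty induced subgraph being regarded as connected). -/
def IsWCS {V : Type*} (G : SimpleGraph V) (M : Set V) : Prop :=
  (∀ u ∈ M, ∀ v ∈ M, u ≠ v →
    ∃ p : G.Walk u v, ∀ w ∈ p.support, w ∈ M → w = u ∨ w = v) ∧
  (G.induce Mᶜ).Preconnected

/-- Vertices of the graph `G(φ)` built from a 3-CNF formula `φ` with `n` variables and
`m` clauses: a literal vertex `lit i b` for each variable `i` and polarity `b`
(`lit i true` is `Xᵢ`, `lit i false` is `X̄ᵢ`), a gadget vertex `gad i = Yᵢ` for each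
variable, a clause vertex `cl j = Cⱼ` for each clause, and one extra vertex `z`. -/
inductive SatVtx (n m : ℕ) where
  | lit : Fin n → Bool → SatVtx n m
  | gad : Fin n → SatVtx n m
  | cl : Fin m → SatVtx n m
  | z : SatVtx n m
deriving DecidableEq

/-- The adjacency-generating relation of `G(φ)`, where the 3-CNF formula is encoded
by `c : Fin m → Fin 3 → Fin n × Bool` giving the three literals of each clause
(`(i, b)` is the literal `xᵢ` if `b = true` and `x̄ᵢ` if `b = false`):
`Xᵢ, X̄ᵢ, Yᵢ` form a triangle; the clause vertex `Cⱼ` is adjacent exactly to the three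
literal vertices corresponding to the negations of its literals; and `z` is adjacent
to all literal vertices. -/
def satRel {n m : ℕ} (c : Fin m → Fin 3 → Fin n × Bool) :
    SatVtx n m → SatVtx n m → Prop
  | .lit i _, .lit i' _ => i = i'
  | .lit i _, .gad i' => i = i'
  | .gad i, .lit i' _ => i = i'
  | .lit i b, .cl j => ∃ k : Fin 3, c j k = (i, !b)
  | .cl j, .lit i b => ∃ k : Fin 3, c j k = (i, !b)
  | .lit _ _, .z => True
  | .z, .lit _ _ => True
  | _, _ => False

/-- The graph `G(φ)` constructed from the 3-CNF formula encoded by `c`. -/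
def satGraph {n m : ℕ} (c : Fin m → Fin 3 → Fin n × Bool) : SimpleGraph (SatVtx n m) :=
  SimpleGraph.fromRel (satRel c)

/-- In the graph `G(φ)` built from a 3-CNF formula `φ` (in which every variable occurs
both unnegated and negated), for every well-connected set `M` with `|M| ≥ 5` and every
clause index `j`: if the clause vertex `Cⱼ` belongs to `M`, then not all three of its
neighbors (the vertices for the negations of the three literals of clause `j`)
belong to `M`. -/
theorem wcs_clause_vertex {n m : ℕ} (c : Fin m → Fin 3 → Fin n × Bool)
    (hocc : ∀ (i : Fin n) (b : Bool), ∃ (j : Fin m) (k : Fin 3), c j k = (i, b))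
    (M : Set (SatVtx n m)) (hM : IsWCS (satGraph c) M)
    (hcard : 5 ≤ Nat.card M) (j : Fin m) (hj : SatVtx.cl j ∈ M) :
    ¬ ∀ k : Fin 3, SatVtx.lit (c j k).1 (!(c j k).2) ∈ M := by

  intro hall
  set L : Fin 3 → SatVtx n m := fun k => SatVtx.lit (c j k).1 (!(c j k).2) with hL
  -- find a fifth vertex of M
  have hex : ∃ u ∈ M, u ≠ SatVtx.cl j ∧ ∀ k : Fin 3, u ≠ L k := by
    by_contra h
    push_neg at h
    have hsub : M ⊆ {SatVtx.cl j, L 0, L 1, L 2} := by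
      intro u hu
      rcases em (u = SatVtx.cl j) with h1 | h1
      · exact Or.inl h1
      · obtain ⟨k, hk⟩ := h u hu h1
        fin_cases k
        · exact Or.inr (Or.inl hk)
        · exact Or.inr (Or.inr (Or.inl hk))
        · exact Or.inr (Or.inr (Or.inr hk))
    have hfin : ({SatVtx.cl j, L 0, L 1, L 2} : Set (SatVtx n m)).Finite := by
      apply Set.Finite.insert; apply Set.Finite.insert; apply Set.Finite.insert
      exact Set.finite_singleton _
    have h1 : M.ncard ≤ ({SatVtx.cl j, L 0, L 1, L 2} : Set (SatVtx n m)).ncard :=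
      Set.ncard_le_ncard hsub hfin
    have h2 : ({SatVtx.cl j, L 0, L 1, L 2} : Set (SatVtx n m)).ncard ≤ 4 := by
      calc ({SatVtx.cl j, L 0, L 1, L 2} : Set (SatVtx n m)).ncard
          ≤ ({L 0, L 1, L 2} : Set (SatVtx n m)).ncard + 1 := Set.ncard_insert_le _ _
        _ ≤ (({L 1, L 2} : Set (SatVtx n m)).ncard + 1) + 1 := by
            have := Set.ncard_insert_le (L 0) ({L 1, L 2} : Set (SatVtx n m))
            omega
        _ ≤ ((({L 2} : Set (SatVtx n m)).ncard + 1) + 1) + 1 := by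
            have := Set.ncard_insert_le (L 1) ({L 2} : Set (SatVtx n m))
            omega
        _ ≤ 4 := by rw [Set.ncard_singleton]
    rw [← Nat.card_coe_set_eq] at h1
    omega
  obtain ⟨u, hu, hune, hunL⟩ := hex
  obtain ⟨p, hp⟩ := hM.1 (SatVtx.cl j) hj u hu hune.symm
  cases p with
  | nil => exact hune rfl
  | @cons _ w _ hadj q =>
    have hwadj : (satGraph c).Adj (SatVtx.cl j) w := hadj
    rw [satGraph, SimpleGraph.fromRel_adj] at hwadj
    obtain ⟨hne, hrel⟩ := hwadj
    have hwL : ∃ k : Fin 3, w = L k := by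
      cases w with
      | lit i b =>
        have hex' : ∃ k : Fin 3, c j k = (i, !b) := by
          rcases hrel with h | h
          · exact h
          · exact h
        obtain ⟨k, hk⟩ := hex'
        refine ⟨k, ?_⟩
        have h1 : (c j k).1 = i := by rw [hk]
        have h2 : (c j k).2 = !b := by rw [hk]
        simp [hL, h1, h2]
      | gad i => simp [satRel] at hrel
      | cl j' => simp [satRel] at hrel
      | z => simp [satRel] at hrel
    obtain ⟨k, hk⟩ := hwL
    have hwM : w ∈ M := hk ▸ hall k
    have hmem : w ∈ (SimpleGraph.Walk.cons hadj q).support := by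
      rw [SimpleGraph.Walk.support_cons]
      exact List.mem_cons_of_mem _ q.start_mem_support
    rcases hp w hmem hwM with h | h
    · exact hne h.symm
    · exact hunL k (h ▸ hk)
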